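/- Let N, d be positive integers and let U be a unitary matrix indexed by Fin N × Fin d. Then the Environment Algebra A(U) is commutative (∀ a b ∈ A(U), a*b = b*a) if and only if there exist a positive integer m, matrices P₁, …, P_m : Matrix (Fin d) (Fin d) ℂ which are nonzero orthogonal projections (P_iᴴ = P_i, P_i*P_i = P_i), mutually orthogonal (P_i*P_j = 0 for i ≠ j), summing to the identity (∑ P_i = 1), and unitary matrices V₁, …, V_m : Matrix (Fin N) (Fin N) ℂ, such that U = ∑_{i=1}^m V_i ⊗ P_i. -/

import Mathlib

open scoped Kronecker
open Matrix

/-- The slice `M(f,g)` of an operator on `ℂ^N ⊗ ℂ^d`: the partial trace `Tr_{|g⟩⟨f|}[M]`,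
given by `M(f,g) k l = ∑ i j, conj (f i) * g j * M (i,k) (j,l)`. -/
noncomputable def envSlice {N d : ℕ} (M : Matrix (Fin N × Fin d) (Fin N × Fin d) ℂ)
    (f g : Fin N → ℂ) : Matrix (Fin d) (Fin d) ℂ :=
  Matrix.of fun k l => ∑ i, ∑ j, (starRingEnd ℂ) (f i) * g j * M (i, k) (j, l)

/-- The Environment Algebra `A(U)`: the unital star-subalgebra generated by all slices
`U(f,g)` and `Uᴴ(f,g)`. -/
noncomputable def envAlg {N d : ℕ} (U : Matrix (Fin N × Fin d) (Fin N × Fin d) ℂ) :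
    StarSubalgebra ℂ (Matrix (Fin d) (Fin d) ℂ) :=
  StarAlgebra.adjoin ℂ
    ({A | ∃ f g, A = envSlice U f g} ∪ {A | ∃ f g, A = envSlice Uᴴ f g})

/-- The Environment Right-Action Algebra `A_r(U)`: the unital star-subalgebra generated by all
products `Uᴴ(f₁,g₁) * U(f₂,g₂)`. -/
noncomputable def envActAlg {N d : ℕ} (U : Matrix (Fin N × Fin d) (Fin N × Fin d) ℂ) :
    StarSubalgebra ℂ (Matrix (Fin d) (Fin d) ℂ) :=
  StarAlgebra.adjoin ℂ
    {A | ∃ f₁ g₁ f₂ g₂, A = envSlice Uᴴ f₁ g₁ * envSlice U f₂ g₂}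

namespace EnvAux

variable {N d m : ℕ}

lemma envSlice_apply (M : Matrix (Fin N × Fin d) (Fin N × Fin d) ℂ) (f g : Fin N → ℂ) (k l : Fin d) :
    envSlice M f g k l = ∑ i, ∑ j, (starRingEnd ℂ) (f i) * g j * M (i, k) (j, l) := rfl

lemma envSlice_single (M : Matrix (Fin N × Fin d) (Fin N × Fin d) ℂ) (a b : Fin N) (k l : Fin d) :
    envSlice M (Pi.single a 1) (Pi.single b 1) k l = M (a, k) (b, l) := by
  rw [envSlice_apply]
  simp [Pi.single_apply, apply_ite (starRingEnd ℂ), ite_mul, Finset.sum_ite_eq]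

lemma kron_conjTranspose (A : Matrix (Fin N) (Fin N) ℂ) (B : Matrix (Fin d) (Fin d) ℂ) :
    (A ⊗ₖ B)ᴴ = Aᴴ ⊗ₖ Bᴴ := by
  ext ⟨a, k⟩ ⟨b, l⟩
  simp [conjTranspose_apply, kroneckerMap_apply]

lemma envSlice_kronSum (V : Fin m → Matrix (Fin N) (Fin N) ℂ)
    (P : Fin m → Matrix (Fin d) (Fin d) ℂ) (f g : Fin N → ℂ) :
    envSlice (∑ x, V x ⊗ₖ P x) f g
      = ∑ x, (∑ a, ∑ b, (starRingEnd ℂ) (f a) * g b * V x a b) • P x := by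
  ext k l
  rw [envSlice_apply]
  simp only [Matrix.sum_apply, kroneckerMap_apply, Finset.mul_sum, Matrix.smul_apply, smul_eq_mul,
    Finset.sum_mul]
  calc ∑ a, ∑ b, ∑ x, (starRingEnd ℂ) (f a) * g b * (V x a b * P x k l)
      = ∑ a, ∑ x, ∑ b, (starRingEnd ℂ) (f a) * g b * (V x a b * P x k l) :=
        Finset.sum_congr rfl fun _ _ => Finset.sum_comm
    _ = ∑ x, ∑ a, ∑ b, (starRingEnd ℂ) (f a) * g b * (V x a b * P x k l) := Finset.sum_comm
    _ = _ := Finset.sum_congr rfl fun x _ => Finset.sum_congr rfl fun a _ =>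
        Finset.sum_congr rfl fun b _ => by ring

lemma kron_sum_right (A : Matrix (Fin N) (Fin N) ℂ) (P : Fin m → Matrix (Fin d) (Fin d) ℂ) :
    A ⊗ₖ (∑ i, P i) = ∑ i, A ⊗ₖ P i := by
  ext ⟨a, k⟩ ⟨b, l⟩
  simp [kroneckerMap_apply, Matrix.sum_apply, Finset.mul_sum]

lemma sum_kron_mul (A B : Fin m → Matrix (Fin N) (Fin N) ℂ)
    (P : Fin m → Matrix (Fin d) (Fin d) ℂ)
    (hidem : ∀ i, P i * P i = P i) (horth : ∀ i j, i ≠ j → P i * P j = 0) :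
    (∑ i, A i ⊗ₖ P i) * (∑ j, B j ⊗ₖ P j) = ∑ i, (A i * B i) ⊗ₖ P i := by
  rw [Finset.sum_mul_sum]
  refine Finset.sum_congr rfl fun i _ => ?_
  rw [Finset.sum_eq_single i]
  · rw [← mul_kronecker_mul, hidem]
  · intro j _ hj
    rw [← mul_kronecker_mul, horth i j (Ne.symm hj), kronecker_zero]
  · intro h; exact absurd (Finset.mem_univ i) h

lemma kron_cancel (P : Fin m → Matrix (Fin d) (Fin d) ℂ)
    (hidem : ∀ i, P i * P i = P i) (horth : ∀ i j, i ≠ j → P i * P j = 0)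
    (hne : ∀ i, P i ≠ 0) (A B : Fin m → Matrix (Fin N) (Fin N) ℂ)
    (h : ∑ i, A i ⊗ₖ P i = ∑ i, B i ⊗ₖ P i) (j : Fin m) : A j = B j := by
  ext a b
  have h1 : ∑ i, A i a b • P i = ∑ i, B i a b • P i := by
    ext k l
    have := congrFun (congrFun h (a, k)) (b, l)
    simpa [Matrix.sum_apply, kroneckerMap_apply] using this
  have h2 := congrArg (fun M => M * P j) h1
  simp only [Finset.sum_mul, smul_mul_assoc] at h2
  rw [Finset.sum_eq_single j (fun i _ hi => by rw [horth i j hi, smul_zero])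
      (fun hj => absurd (Finset.mem_univ j) hj),
    Finset.sum_eq_single j (fun i _ hi => by rw [horth i j hi, smul_zero])
      (fun hj => absurd (Finset.mem_univ j) hj), hidem] at h2
  obtain ⟨k, l, hkl⟩ : ∃ k l, P j k l ≠ 0 := by
    by_contra hc
    push_neg at hc
    exact hne j (by ext k l; simp [hc])
  have h3 := congrFun (congrFun h2 k) l
  simp only [Matrix.smul_apply, smul_eq_mul] at h3
  exact mul_right_cancel₀ hkl h3

lemma backward_comm {U : Matrix (Fin N × Fin d) (Fin N × Fin d) ℂ}
    (P : Fin m → Matrix (Fin d) (Fin d) ℂ) (V : Fin m → Matrix (Fin N) (Fin N) ℂ)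
    (hherm : ∀ i, (P i)ᴴ = P i) (hidem : ∀ i, P i * P i = P i)
    (horth : ∀ i j, i ≠ j → P i * P j = 0) (hsum : (∑ i, P i) = 1)
    (hUeq : U = ∑ i, V i ⊗ₖ P i) :
    ∀ a ∈ envAlg U, ∀ b ∈ envAlg U, a * b = b * a := by
  set sp := Submodule.span ℂ (Set.range P) with hsp
  have hPmem : ∀ i, P i ∈ sp := fun i => Submodule.subset_span ⟨i, rfl⟩
  have hbase : ∀ i j, P i * P j ∈ sp := by
    intro i j
    by_cases h : i = j
    · subst h; rw [hidem]; exact hPmem i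
    · rw [horth i j h]; exact zero_mem _
  have hmul : ∀ x ∈ sp, ∀ y ∈ sp, x * y ∈ sp := by
    intro x hx
    induction hx using Submodule.span_induction with
    | mem x hx =>
      obtain ⟨i, rfl⟩ := hx
      intro y hy
      induction hy using Submodule.span_induction with
      | mem y hy => obtain ⟨j, rfl⟩ := hy; exact hbase i j
      | zero => rw [mul_zero]; exact zero_mem _
      | add y z _ _ ihy ihz => rw [mul_add]; exact add_mem ihy ihz
      | smul c y _ ih => rw [mul_smul_comm]; exact Submodule.smul_mem _ _ ih
    | zero => intro y hy; rw [zero_mul]; exact zero_mem _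
    | add x y _ _ ihx ihy => intro z hz; rw [add_mul]; exact add_mem (ihx z hz) (ihy z hz)
    | smul c x _ ih => intro z hz; rw [smul_mul_assoc]; exact Submodule.smul_mem _ _ (ih z hz)
  have hstar : ∀ x ∈ sp, star x ∈ sp := by
    intro x hx
    induction hx using Submodule.span_induction with
    | mem x hx =>
      obtain ⟨i, rfl⟩ := hx
      rw [Matrix.star_eq_conjTranspose, hherm]; exact hPmem i
    | zero => rw [star_zero]; exact zero_mem _
    | add x y _ _ ihx ihy => rw [star_add]; exact add_mem ihx ihy
    | smul c x _ ih => rw [star_smul]; exact Submodule.smul_mem _ _ ih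
  have hcommP : ∀ i j, P i * P j = P j * P i := by
    intro i j
    by_cases h : i = j
    · subst h; rfl
    · rw [horth i j h, horth j i (Ne.symm h)]
  have hcomm : ∀ x ∈ sp, ∀ y ∈ sp, x * y = y * x := by
    intro x hx
    induction hx using Submodule.span_induction with
    | mem x hx =>
      obtain ⟨i, rfl⟩ := hx
      intro y hy
      induction hy using Submodule.span_induction with
      | mem y hy => obtain ⟨j, rfl⟩ := hy; exact hcommP i j
      | zero => rw [mul_zero, zero_mul]
      | add y z _ _ ihy ihz => rw [mul_add, add_mul, ihy, ihz]
      | smul c y _ ih => rw [mul_smul_comm, smul_mul_assoc, ih]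
    | zero => intro y _; rw [zero_mul, mul_zero]
    | add x y _ _ ihx ihy => intro z hz; rw [add_mul, mul_add, ihx z hz, ihy z hz]
    | smul c x _ ih => intro z hz; rw [smul_mul_assoc, mul_smul_comm, ih z hz]
  have hgen : ∀ x ∈ ({A | ∃ f g, A = envSlice U f g} ∪ {A | ∃ f g, A = envSlice Uᴴ f g} :
      Set (Matrix (Fin d) (Fin d) ℂ)), x ∈ sp := by
    rintro x (⟨f, g, rfl⟩ | ⟨f, g, rfl⟩)
    · rw [hUeq, envSlice_kronSum]
      exact Submodule.sum_mem _ fun i _ => Submodule.smul_mem _ _ (hPmem i)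
    · have : Uᴴ = ∑ i, (V i)ᴴ ⊗ₖ P i := by
        rw [hUeq, Matrix.conjTranspose_sum]
        exact Finset.sum_congr rfl fun i _ => by rw [kron_conjTranspose, hherm]
      rw [this, envSlice_kronSum]
      exact Submodule.sum_mem _ fun i _ => Submodule.smul_mem _ _ (hPmem i)
  have hmemsp : ∀ x ∈ envAlg U, x ∈ sp := by
    intro x hx
    induction hx using StarAlgebra.adjoin_induction with
    | mem x hx => exact hgen x hx
    | algebraMap r =>
      rw [Algebra.algebraMap_eq_smul_one, ← hsum]
      exact Submodule.smul_mem _ _ (Submodule.sum_mem _ fun i _ => hPmem i)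
    | add x y _ _ ihx ihy => exact add_mem ihx ihy
    | mul x y _ _ ihx ihy => exact hmul x ihx y ihy
    | star x _ ih => exact hstar x ih
  intro a ha b hb
  exact hcomm a (hmemsp a ha) b (hmemsp b hb)

variable (U : Matrix (Fin N × Fin d) (Fin N × Fin d) ℂ)


variable {N d : ℕ} (U : Matrix (Fin N × Fin d) (Fin N × Fin d) ℂ)

noncomputable def φm : Matrix (Fin d) (Fin d) ℂ ≃⋆ₐ[ℂ]
    (EuclideanSpace ℂ (Fin d) →L[ℂ] EuclideanSpace ℂ (Fin d)) :=
  Matrix.toEuclideanCLM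

def hermIdx : Type := {p : Matrix (Fin d) (Fin d) ℂ // p ∈ envAlg U ∧ p.IsHermitian}

noncomputable def Top : hermIdx U → Module.End ℂ (EuclideanSpace ℂ (Fin d)) :=
  fun i => (φm i.1 : EuclideanSpace ℂ (Fin d) →ₗ[ℂ] EuclideanSpace ℂ (Fin d))

lemma Top_isSymmetric (i : hermIdx U) : (Top U i).IsSymmetric := by
  have h : (Top U i) = Matrix.toEuclideanLin i.1 := Matrix.coe_toEuclideanCLM_eq_toEuclideanLin _
  rw [h]
  exact Matrix.isHermitian_iff_isSymmetric.mp i.2.2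

lemma Top_comm (hcomm : ∀ a ∈ envAlg U, ∀ b ∈ envAlg U, a * b = b * a) :
    Pairwise (Function.onFun Commute (Top U)) := by
  intro i j _
  show Top U i * Top U j = Top U j * Top U i
  have h := hcomm i.1 i.2.1 j.1 j.2.1
  apply LinearMap.ext
  intro v
  show (φm i.1) ((φm j.1) v) = (φm j.1) ((φm i.1) v)
  have h1 : φm (i.1 * j.1) = φm i.1 * φm j.1 := map_mul _ _ _
  have h2 : φm (j.1 * i.1) = φm j.1 * φm i.1 := map_mul _ _ _
  have := congrFun (congrArg (fun (T : _ →L[ℂ] _) => (T : _ → _)) (h1.symm.trans (by rw [h, h2])))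
  exact this v

noncomputable abbrev Wsp (χ : hermIdx U → ℂ) : Submodule ℂ (EuclideanSpace ℂ (Fin d)) :=
  ⨅ i, Module.End.eigenspace (Top U i) (χ i)

lemma Wsp_top (hcomm : ∀ a ∈ envAlg U, ∀ b ∈ envAlg U, a * b = b * a) :
    ⨆ χ : hermIdx U → ℂ, Wsp U χ = ⊤ :=
  LinearMap.IsSymmetric.iSup_iInf_eq_top_of_commute (Top_isSymmetric U) (Top_comm U hcomm)

lemma Wsp_inner_zero {χ χ' : hermIdx U → ℂ} (h : χ ≠ χ')
    {u w : EuclideanSpace ℂ (Fin d)} (hu : u ∈ Wsp U χ) (hw : w ∈ Wsp U χ') :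
    inner (𝕜 := ℂ) u w = 0 := by
  have horth := LinearMap.IsSymmetric.orthogonalFamily_iInf_eigenspaces (T := Top U)
    (Top_isSymmetric U)
  exact horth h (⟨u, hu⟩ : ↥(Wsp U χ)) (⟨w, hw⟩ : ↥(Wsp U χ'))

lemma Wsp_finite : {χ : hermIdx U → ℂ | Wsp U χ ≠ ⊥}.Finite := by
  have horth := LinearMap.IsSymmetric.orthogonalFamily_iInf_eigenspaces (T := Top U)
    (Top_isSymmetric U)
  exact Submodule.finite_ne_bot_of_iSupIndep horth.independent

lemma conjTranspose_mem {a : Matrix (Fin d) (Fin d) ℂ} (ha : a ∈ envAlg U) : aᴴ ∈ envAlg U := by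
  rw [← Matrix.star_eq_conjTranspose]; exact star_mem ha

noncomputable def herm1 (a : Matrix (Fin d) (Fin d) ℂ) (ha : a ∈ envAlg U) : hermIdx U :=
  ⟨(2⁻¹ : ℂ) • (a + aᴴ),
    ⟨by rw [Algebra.smul_def]
        exact mul_mem (algebraMap_mem _ _) (add_mem ha (conjTranspose_mem U ha)),
     by
      show ((2⁻¹ : ℂ) • (a + aᴴ))ᴴ = (2⁻¹ : ℂ) • (a + aᴴ)
      rw [conjTranspose_smul, conjTranspose_add, conjTranspose_conjTranspose]
      have : star (2⁻¹ : ℂ) = (2⁻¹ : ℂ) := by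
        simp [Complex.star_def, map_inv₀]
      rw [this, add_comm]⟩⟩

noncomputable def herm2 (a : Matrix (Fin d) (Fin d) ℂ) (ha : a ∈ envAlg U) : hermIdx U :=
  ⟨(Complex.I / 2) • (aᴴ - a),
    ⟨by rw [Algebra.smul_def]
        exact mul_mem (algebraMap_mem _ _) (sub_mem (conjTranspose_mem U ha) ha),
     by
      show ((Complex.I / 2) • (aᴴ - a))ᴴ = (Complex.I / 2) • (aᴴ - a)
      rw [conjTranspose_smul, conjTranspose_sub, conjTranspose_conjTranspose]
      have : star (Complex.I / 2) = -(Complex.I / 2) := by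
        simp [Complex.star_def, map_div₀, neg_div]
      rw [this, neg_smul, ← smul_neg, neg_sub]⟩⟩

lemma herm_decomp (a : Matrix (Fin d) (Fin d) ℂ) (ha : a ∈ envAlg U) :
    a = (herm1 U a ha).1 + Complex.I • (herm2 U a ha).1 := by
  show a = (2⁻¹ : ℂ) • (a + aᴴ) + Complex.I • ((Complex.I / 2) • (aᴴ - a))
  rw [smul_smul]
  have hI : Complex.I * (Complex.I / 2) = -(2⁻¹ : ℂ) := by
    rw [div_eq_mul_inv, ← mul_assoc, Complex.I_mul_I]
    norm_num
  rw [hI]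
  module

noncomputable def cval (χ : hermIdx U → ℂ) (a : Matrix (Fin d) (Fin d) ℂ)
    (ha : a ∈ envAlg U) : ℂ :=
  χ (herm1 U a ha) + Complex.I * χ (herm2 U a ha)

lemma scalar_act (χ : hermIdx U → ℂ) (a : Matrix (Fin d) (Fin d) ℂ) (ha : a ∈ envAlg U)
    {v : EuclideanSpace ℂ (Fin d)} (hv : v ∈ Wsp U χ) :
    φm a v = cval U χ a ha • v := by
  have h1 : v ∈ Module.End.eigenspace (Top U (herm1 U a ha)) (χ (herm1 U a ha)) :=
    (Submodule.mem_iInf _).mp hv _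
  have h2 : v ∈ Module.End.eigenspace (Top U (herm2 U a ha)) (χ (herm2 U a ha)) :=
    (Submodule.mem_iInf _).mp hv _
  rw [Module.End.mem_eigenspace_iff] at h1 h2
  have e1 : (φm (herm1 U a ha).1) v = χ (herm1 U a ha) • v := h1
  have e2 : (φm (herm2 U a ha).1) v = χ (herm2 U a ha) • v := h2
  have ha' : φm a = φm (herm1 U a ha).1 + Complex.I • φm (herm2 U a ha).1 := by
    rw [← _root_.map_smul φm, ← map_add, ← herm_decomp]
  rw [ha']
  rw [ContinuousLinearMap.add_apply, ContinuousLinearMap.smul_apply, e1, e2,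
    smul_smul, ← add_smul]
  rfl

noncomputable def Qproj (χ : hermIdx U → ℂ) :
    EuclideanSpace ℂ (Fin d) →L[ℂ] EuclideanSpace ℂ (Fin d) :=
  (Wsp U χ).subtypeL ∘L (Wsp U χ).orthogonalProjectionOnto

lemma Qproj_mem (χ : hermIdx U → ℂ) (v : EuclideanSpace ℂ (Fin d)) :
    Qproj U χ v ∈ Wsp U χ := by
  simp only [Qproj, ContinuousLinearMap.comp_apply, Submodule.subtypeL_apply]
  exact SetLike.coe_mem _

lemma Qproj_self (χ : hermIdx U → ℂ) {w : EuclideanSpace ℂ (Fin d)} (hw : w ∈ Wsp U χ) :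
    Qproj U χ w = w := by
  simp only [Qproj, ContinuousLinearMap.comp_apply, Submodule.subtypeL_apply]
  exact (Wsp U χ).starProjection_eq_self_iff.mpr hw

lemma Qproj_zero {χ χ' : hermIdx U → ℂ} (h : χ ≠ χ') {w : EuclideanSpace ℂ (Fin d)}
    (hw : w ∈ Wsp U χ') : Qproj U χ w = 0 := by
  have hmem : w ∈ (Wsp U χ)ᗮ := by
    rw [Submodule.mem_orthogonal]
    intro u hu
    exact Wsp_inner_zero U h hu hw
  simp only [Qproj, ContinuousLinearMap.comp_apply, Submodule.subtypeL_apply]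
  rw [Submodule.orthogonalProjectionOnto_apply_of_mem_orthogonal hmem]
  rfl

noncomputable def Pmat (χ : hermIdx U → ℂ) : Matrix (Fin d) (Fin d) ℂ :=
  (φm (d := d)).symm (Qproj U χ)

lemma φm_Pmat (χ : hermIdx U → ℂ) : φm (Pmat U χ) = Qproj U χ :=
  StarAlgEquiv.apply_symm_apply _ _

set_option synthInstance.maxHeartbeats 400000 in
lemma Pmat_herm (χ : hermIdx U → ℂ) : (Pmat U χ)ᴴ = Pmat U χ := by
  have hsa : star (Qproj U χ) = Qproj U χ :=
    ContinuousLinearMap.isSelfAdjoint_iff_isSymmetric.mpr (Wsp U χ).starProjection_isSymmetric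
  rw [← Matrix.star_eq_conjTranspose, Pmat, ← map_star, hsa]

lemma Pmat_idem (χ : hermIdx U → ℂ) : Pmat U χ * Pmat U χ = Pmat U χ := by
  apply (φm (d := d)).injective
  show φm (Pmat U χ * Pmat U χ) = φm (Pmat U χ)
  rw [_root_.map_mul φm, φm_Pmat]
  apply ContinuousLinearMap.ext
  intro v
  exact Qproj_self U χ (Qproj_mem U χ v)

lemma Pmat_orth {χ χ' : hermIdx U → ℂ} (h : χ ≠ χ') : Pmat U χ * Pmat U χ' = 0 := by
  apply (φm (d := d)).injective
  show φm (Pmat U χ * Pmat U χ') = φm 0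
  rw [_root_.map_mul φm, φm_Pmat, φm_Pmat, map_zero]
  apply ContinuousLinearMap.ext
  intro v
  exact Qproj_zero U h (Qproj_mem U χ' v)

lemma Pmat_ne {χ : hermIdx U → ℂ} (h : Wsp U χ ≠ ⊥) : Pmat U χ ≠ 0 := by
  obtain ⟨x, hx, hx0⟩ := (Submodule.ne_bot_iff _).mp h
  intro hP
  have : Qproj U χ x = 0 := by rw [← φm_Pmat, hP, map_zero]; rfl
  rw [Qproj_self U χ hx] at this
  exact hx0 this

lemma envSlice_mem (f g : Fin N → ℂ) : envSlice U f g ∈ envAlg U :=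
  StarAlgebra.subset_adjoin ℂ _ (Or.inl ⟨f, g, rfl⟩)


lemma forward (hd : 0 < d) (hUl : Uᴴ * U = 1) (hUr : U * Uᴴ = 1)
    (hcomm : ∀ a ∈ envAlg U, ∀ b ∈ envAlg U, a * b = b * a) :
    ∃ (m : ℕ) (_ : 0 < m) (P : Fin m → Matrix (Fin d) (Fin d) ℂ)
      (V : Fin m → Matrix (Fin N) (Fin N) ℂ),
      (∀ i, P i ≠ 0) ∧
      (∀ i, (P i)ᴴ = P i) ∧
      (∀ i, P i * P i = P i) ∧
      (∀ i j, i ≠ j → P i * P j = 0) ∧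
      (∑ i, P i) = 1 ∧
      (∀ i, (V i)ᴴ * V i = 1 ∧ V i * (V i)ᴴ = 1) ∧
      U = ∑ i, (V i) ⊗ₖ (P i) := by
  classical
  set S := (Wsp_finite U).toFinset with hS
  set m := S.card with hm
  set e := S.equivFin with he
  set χv : Fin m → (hermIdx U → ℂ) := fun i => ((e.symm i : ↥S) : hermIdx U → ℂ) with hχv
  have hWne : ∀ i, Wsp U (χv i) ≠ ⊥ := fun i =>
    ((Wsp_finite U).mem_toFinset).mp (e.symm i).2
  have hχinj : Function.Injective χv := by
    intro i j h
    exact e.symm.injective (Subtype.ext h)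
  set P : Fin m → Matrix (Fin d) (Fin d) ℂ := fun i => Pmat U (χv i) with hP
  have hPne : ∀ i, P i ≠ 0 := fun i => Pmat_ne U (hWne i)
  have hPherm : ∀ i, (P i)ᴴ = P i := fun i => Pmat_herm U (χv i)
  have hPidem : ∀ i, P i * P i = P i := fun i => Pmat_idem U (χv i)
  have hPorth : ∀ i j, i ≠ j → P i * P j = 0 := fun i j hij =>
    Pmat_orth U (fun h => hij (hχinj h))
  have hQsum : ∀ v : EuclideanSpace ℂ (Fin d), ∑ i, Qproj U (χv i) v = v := by
    intro v
    have hv : v ∈ ⨆ χ : hermIdx U → ℂ, Wsp U χ := by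
      rw [Wsp_top U hcomm]; trivial
    refine Submodule.iSup_induction (motive := fun x => ∑ i, Qproj U (χv i) x = x)
      (fun χ : hermIdx U → ℂ => Wsp U χ) hv ?_ ?_ ?_
    · intro χ x hx
      have hx' : x ∈ Wsp U χ := hx
      by_cases hbot : Wsp U χ = ⊥
      · rw [hbot, Submodule.mem_bot] at hx'
        subst hx'
        simp
      · have hχS : χ ∈ S := ((Wsp_finite U).mem_toFinset).mpr hbot
        set i0 := e ⟨χ, hχS⟩ with hi0
        have hχeq : χv i0 = χ := by
          rw [hχv]
          simp only [hi0, Equiv.symm_apply_apply]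
        rw [Finset.sum_eq_single i0]
        · rw [Qproj_self U (χv i0) (by rw [hχeq]; exact hx')]
        · intro i _ hii0
          exact Qproj_zero U (fun hc => hii0 (hχinj hc)) (by rw [hχeq]; exact hx')
        · intro hi; exact absurd (Finset.mem_univ i0) hi
    · simp
    · intro x y hx hy
      rw [Finset.sum_congr rfl fun (i : Fin m) _ =>
        map_add (Qproj U (χv i)) x y, Finset.sum_add_distrib, hx, hy]
  have hPsum : (∑ i, P i) = 1 := by
    apply (φm (d := d)).injective
    show φm (∑ i, P i) = φm 1
    rw [map_sum, _root_.map_one φm]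
    rw [Finset.sum_congr rfl fun (i : Fin m) _ => φm_Pmat U (χv i)]
    apply ContinuousLinearMap.ext
    intro v
    rw [ContinuousLinearMap.sum_apply, hQsum v]
    rfl
  have helem : ∀ (a : Matrix (Fin d) (Fin d) ℂ) (ha : a ∈ envAlg U),
      a = ∑ i, cval U (χv i) a ha • P i := by
    intro a ha
    apply (φm (d := d)).injective
    show φm a = φm (∑ i, cval U (χv i) a ha • P i)
    rw [map_sum]
    rw [Finset.sum_congr rfl fun (i : Fin m) _ =>
      (by rw [_root_.map_smul φm, φm_Pmat] :
        φm (cval U (χv i) a ha • P i) = cval U (χv i) a ha • Qproj U (χv i))]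
    apply ContinuousLinearMap.ext
    intro v
    rw [ContinuousLinearMap.sum_apply]
    conv_lhs => rw [← hQsum v, map_sum]
    refine Finset.sum_congr rfl fun i _ => ?_
    rw [ContinuousLinearMap.smul_apply]
    exact scalar_act U (χv i) a ha (Qproj_mem U (χv i) v)
  set V : Fin m → Matrix (Fin N) (Fin N) ℂ := fun i => Matrix.of fun a b =>
    cval U (χv i) (envSlice U (Pi.single a 1) (Pi.single b 1)) (envSlice_mem U _ _) with hV
  have hmpos : 0 < m := by
    rw [hm, Finset.card_pos]
    by_contra hne
    rw [Finset.not_nonempty_iff_eq_empty] at hne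
    have hall : ∀ χ : hermIdx U → ℂ, Wsp U χ = ⊥ := by
      intro χ
      by_contra hbot
      have hmem : χ ∈ S := ((Wsp_finite U).mem_toFinset).mpr hbot
      rw [hne] at hmem
      exact absurd hmem (Finset.notMem_empty χ)
    have htop := Wsp_top U hcomm
    rw [iSup_congr hall, iSup_const] at htop
    haveI : Nontrivial (EuclideanSpace ℂ (Fin d)) :=
      Module.nontrivial_of_finrank_pos (R := ℂ)
        (by rw [finrank_euclideanSpace]; simpa using hd)
    exact bot_ne_top (α := Submodule ℂ (EuclideanSpace ℂ (Fin d))) htop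
  have hUdec : U = ∑ i, (V i) ⊗ₖ (P i) := by
    ext ik jl
    obtain ⟨a, k⟩ := ik
    obtain ⟨b, l⟩ := jl
    have h1 : U (a, k) (b, l) = envSlice U (Pi.single a 1) (Pi.single b 1) k l :=
      (envSlice_single U a b k l).symm
    rw [h1, helem (envSlice U (Pi.single a 1) (Pi.single b 1)) (envSlice_mem U _ _)]
    rw [Matrix.sum_apply, Matrix.sum_apply]
    refine Finset.sum_congr rfl fun i _ => ?_
    rw [Matrix.smul_apply, kroneckerMap_apply, smul_eq_mul]
    rfl
  have hUH : Uᴴ = ∑ i, (V i)ᴴ ⊗ₖ (P i) := by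
    rw [hUdec, Matrix.conjTranspose_sum]
    exact Finset.sum_congr rfl fun i _ => by rw [kron_conjTranspose, hPherm]
  have hone : (1 : Matrix (Fin N × Fin d) (Fin N × Fin d) ℂ)
      = ∑ i, (1 : Matrix (Fin N) (Fin N) ℂ) ⊗ₖ (P i) := by
    rw [← kron_sum_right, hPsum, one_kronecker_one]
  have hVl : ∀ i, (V i)ᴴ * V i = 1 := by
    have hprod : ∑ i, ((V i)ᴴ * V i) ⊗ₖ (P i)
        = ∑ i, (1 : Matrix (Fin N) (Fin N) ℂ) ⊗ₖ (P i) := by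
      rw [← sum_kron_mul _ _ _ hPidem hPorth, ← hUH, ← hUdec, hUl, hone]
    exact kron_cancel P hPidem hPorth hPne _ _ hprod
  have hVr : ∀ i, V i * (V i)ᴴ = 1 := by
    have hprod : ∑ i, (V i * (V i)ᴴ) ⊗ₖ (P i)
        = ∑ i, (1 : Matrix (Fin N) (Fin N) ℂ) ⊗ₖ (P i) := by
      rw [← sum_kron_mul _ _ _ hPidem hPorth, ← hUH, ← hUdec, hUr, hone]
    exact kron_cancel P hPidem hPorth hPne _ _ hprod
  exact ⟨m, hmpos, P, V, hPne, hPherm, hPidem, hPorth, hPsum, fun i => ⟨hVl i, hVr i⟩, hUdec⟩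

end EnvAux

theorem envAlg_commutative_iff (N d : ℕ) (hN : 0 < N) (hd : 0 < d)
    (U : Matrix (Fin N × Fin d) (Fin N × Fin d) ℂ)
    (hU : Uᴴ * U = 1) (hU' : U * Uᴴ = 1) :
    (∀ a ∈ envAlg U, ∀ b ∈ envAlg U, a * b = b * a) ↔
    ∃ (m : ℕ) (_ : 0 < m) (P : Fin m → Matrix (Fin d) (Fin d) ℂ)
      (V : Fin m → Matrix (Fin N) (Fin N) ℂ),
      (∀ i, P i ≠ 0) ∧
      (∀ i, (P i)ᴴ = P i) ∧
      (∀ i, P i * P i = P i) ∧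
      (∀ i j, i ≠ j → P i * P j = 0) ∧
      (∑ i, P i) = 1 ∧
      (∀ i, (V i)ᴴ * V i = 1 ∧ V i * (V i)ᴴ = 1) ∧
      U = ∑ i, V i ⊗ₖ P i := by
  constructor
  · intro hcomm
    obtain ⟨m, hm, P, V, h1, h2, h3, h4, h5, h6, h7⟩ := EnvAux.forward U hd hU hU' hcomm
    exact ⟨m, hm, P, V, h1, h2, h3, h4, h5, h6, h7⟩
  · rintro ⟨m, hm, P, V, _, h2, h3, h4, h5, _, h7⟩
    exact EnvAux.backward_comm P V h2 h3 h4 h5 h7
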